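/- Consider the action of ℂ* on ℂ² \ {0} given by t·(x,y) = (t² x, t³ y). The set of orbits of solutions of x^15 + y^10 = 0 in ℂ² \ {0} has exactly 5 elements. -/

import Mathlib

open Polynomial

/-- invariant map to fifth roots of unity -/
noncomputable def invMap (p : {p : ℂ × ℂ // p ≠ 0 ∧ p.1 ^ 15 + p.2 ^ 10 = 0}) : ℂ :=
  -(p.1.1 ^ 3 / p.1.2 ^ 2)

lemma sol_ne (p : {p : ℂ × ℂ // p ≠ 0 ∧ p.1 ^ 15 + p.2 ^ 10 = 0}) :
    p.1.1 ≠ 0 ∧ p.1.2 ≠ 0 := by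
  obtain ⟨⟨x, y⟩, hne, heq⟩ := p
  simp only [ne_eq, Prod.mk_eq_zero] at hne ⊢
  constructor
  · rintro rfl
    have : y ^ 10 = 0 := by linear_combination heq
    have : y = 0 := pow_eq_zero_iff (by norm_num) |>.mp this
    exact hne ⟨rfl, this⟩
  · rintro rfl
    have : x ^ 15 = 0 := by linear_combination heq
    have : x = 0 := pow_eq_zero_iff (by norm_num) |>.mp this
    exact hne ⟨this, rfl⟩

lemma invMap_pow (p : {p : ℂ × ℂ // p ≠ 0 ∧ p.1 ^ 15 + p.2 ^ 10 = 0}) :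
    invMap p ^ 5 = 1 := by
  obtain ⟨hx, hy⟩ := sol_ne p
  obtain ⟨⟨x, y⟩, hne, heq⟩ := p
  simp only [invMap] at *
  field_simp
  linear_combination -heq

/-- The set of orbits of solutions of `x^15 + y^10 = 0` in `ℂ² \ {0}` under the
ℂ*-action `t·(x,y) = (t²x, t³y)` has exactly 5 elements. -/
theorem stmt_6 :
    Nat.card (Quot (fun (p q : {p : ℂ × ℂ // p ≠ 0 ∧ p.1 ^ 15 + p.2 ^ 10 = 0}) =>
      ∃ t : ℂˣ, q.1.1 = (t : ℂ) ^ 2 * p.1.1 ∧ q.1.2 = (t : ℂ) ^ 3 * p.1.2)) = 5 := by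
  set r := fun (p q : {p : ℂ × ℂ // p ≠ 0 ∧ p.1 ^ 15 + p.2 ^ 10 = 0}) =>
      ∃ t : ℂˣ, q.1.1 = (t : ℂ) ^ 2 * p.1.1 ∧ q.1.2 = (t : ℂ) ^ 3 * p.1.2 with hr
  -- lift the invariant map to the quotient
  have hwd : ∀ p q, r p q → (⟨invMap p, invMap_pow p⟩ : {v : ℂ // v ^ 5 = 1}) =
      ⟨invMap q, invMap_pow q⟩ := by
    rintro p q ⟨t, h1, h2⟩
    obtain ⟨hx, hy⟩ := sol_ne p
    have ht : (t : ℂ) ≠ 0 := t.ne_zero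
    ext
    simp only [invMap, h1, h2]
    field_simp
  let F : Quot r → {v : ℂ // v ^ 5 = 1} :=
    Quot.lift (fun p => ⟨invMap p, invMap_pow p⟩) hwd
  have hbij : Function.Bijective F := by
    constructor
    · rintro ⟨p⟩ ⟨q⟩ h
      have h' : invMap p = invMap q := by
        have := congrArg Subtype.val h
        simpa [F] using this
      apply Quot.sound
      obtain ⟨hx, hy⟩ := sol_ne p
      obtain ⟨hx', hy'⟩ := sol_ne q
      obtain ⟨s, hs⟩ := IsAlgClosed.exists_pow_nat_eq (k := ℂ) (q.1.2 / p.1.2) (n := 3)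
        (by norm_num)
      have hs0 : s ≠ 0 := by
        intro h0; rw [h0] at hs
        simp at hs
        exact absurd (div_eq_zero_iff.mp hs.symm) (by tauto)
      -- cube of (q.x / (s^2 * p.x)) equals 1
      have hs'' : q.1.2 = s ^ 3 * p.1.2 := by
        field_simp [hs0] at hs
        linear_combination -hs
      have hcube : (q.1.1 / (s ^ 2 * p.1.1)) ^ 3 = 1 := by
        have this1 : q.1.1 ^ 3 * p.1.2 ^ 2 = q.1.2 ^ 2 * p.1.1 ^ 3 := by
          simp only [invMap] at h'
          field_simp at h'
          linear_combination h'
        rw [div_pow, div_eq_one_iff_eq (pow_ne_zero _ (mul_ne_zero (pow_ne_zero _ hs0) hx))]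
        apply mul_right_cancel₀ (pow_ne_zero 2 hy)
        linear_combination this1 + p.1.1 ^ 3 * (q.1.2 + s ^ 3 * p.1.2) * hs''
      set ω := q.1.1 / (s ^ 2 * p.1.1) with hω
      have hω0 : ω ≠ 0 := by
        apply div_ne_zero hx'
        exact mul_ne_zero (pow_ne_zero _ hs0) hx
      refine ⟨Units.mk0 (ω ^ 2 * s) (mul_ne_zero (pow_ne_zero _ hω0) hs0), ?_, ?_⟩
      · have : (ω ^ 2 * s) ^ 2 = ω * s ^ 2 := by
          have : ω ^ 4 = ω := by
            calc ω ^ 4 = ω ^ 3 * ω := by ring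
            _ = ω := by rw [hcube]; ring
          calc (ω ^ 2 * s) ^ 2 = ω ^ 4 * s ^ 2 := by ring
          _ = ω * s ^ 2 := by rw [this]
        rw [Units.val_mk0, this, hω]
        field_simp
      · have : (ω ^ 2 * s) ^ 3 = s ^ 3 := by
          calc (ω ^ 2 * s) ^ 3 = (ω ^ 3) ^ 2 * s ^ 3 := by ring
          _ = s ^ 3 := by rw [hcube]; ring
        rw [Units.val_mk0, this, hs]
        field_simp
    · rintro ⟨v, hv⟩
      obtain ⟨x, hx⟩ := IsAlgClosed.exists_pow_nat_eq (k := ℂ) (-v) (n := 3) (by norm_num)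
      have hx0 : x ≠ 0 := by
        intro h0; rw [h0] at hx
        have hv0 : v = 0 := by linear_combination hx
        rw [hv0] at hv; norm_num at hv
      have hsol : ((x, 1) : ℂ × ℂ) ≠ 0 ∧ x ^ 15 + (1:ℂ) ^ 10 = 0 := by
        constructor
        · simp [Prod.ext_iff]
        · have : x ^ 15 = (x ^ 3) ^ 5 := by ring
          rw [this, hx]
          have : (-v) ^ 5 = -(v ^ 5) := by ring
          rw [this, hv]; ring
      refine ⟨Quot.mk r ⟨(x, 1), hsol⟩, ?_⟩
      simp only [F, Quot.lift_mk]
      ext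
      simp [invMap, hx]
  rw [Nat.card_congr (Equiv.ofBijective F hbij)]
  -- now count fifth roots of unity in ℂ
  have hprim := Complex.isPrimitiveRoot_exp 5 (by norm_num)
  have hset : {v : ℂ // v ^ 5 = 1} ≃ (nthRootsFinset 5 (1 : ℂ) : Finset ℂ) := by
    apply Equiv.subtypeEquiv (Equiv.refl ℂ)
    intro a
    simp [Polynomial.mem_nthRootsFinset (by norm_num : 0 < 5)]
  rw [Nat.card_congr hset, Nat.card_eq_finsetCard, hprim.card_nthRootsFinset]
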